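/- Let p ≥ 2 be an integer and let A ∈ GLₙ(ℂ(z)) be a matrix of rational functions whose associated Mahler system φ_p(Y) = AY is regular singular at 0, i.e. there exists an n×n matrix T of germs of functions meromorphic at 0 with determinant not identically zero such that T(z^p)⁻¹·A(z)·T(z) is regular at 0. Then there exist an n×n matrix F₀ of functions meromorphic on the open unit disk D(0,1) with determinant not identically zero, and a constant matrix A₀ ∈ GLₙ(ℂ), such that A(z)·F₀(z) = F₀(z^p)·A₀ as meromorphic matrices on D(0,1). -/

import Mathlib

open Metric Filter Topology

/-- Evaluation of a rational function over `ℂ` at a point of `ℂ`. -/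
noncomputable def ratEval (r : RatFunc ℂ) (z : ℂ) : ℂ := r.eval (RingHom.id ℂ) z

attribute [local instance] Matrix.linftyOpNormedRing Matrix.linftyOpNormedAlgebra
  Matrix.linftyOpNormedAddCommGroup Matrix.linftyOpNormedSpace

namespace MahlerAux


variable {n : ℕ}

abbrev Mat (n : ℕ) := Matrix (Fin n) (Fin n) ℂ

noncomputable def entryCLM (i j : Fin n) : Mat n →L[ℂ] ℂ :=
  LinearMap.toContinuousLinearMap
    { toFun := fun A => A i j
      map_add' := fun _ _ => rfl
      map_smul' := fun _ _ => rfl }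

lemma analyticAt_entry {f : ℂ → Mat n} {x : ℂ} (h : AnalyticAt ℂ f x) (i j : Fin n) :
    AnalyticAt ℂ (fun z => f z i j) x :=
  ((entryCLM i j).analyticAt (f x)).comp h

lemma analyticAt_matrix {f : ℂ → Mat n} {x : ℂ}
    (h : ∀ i j, AnalyticAt ℂ (fun z => f z i j) x) : AnalyticAt ℂ f x := by
  have hrw : (fun z => ∑ i : Fin n, ∑ j : Fin n,
      (f z i j) • Matrix.single i j (1 : ℂ)) = f := by
    funext z
    simp only [Matrix.smul_single, smul_eq_mul, mul_one]
    exact (Matrix.matrix_eq_sum_single (f z)).symm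
  rw [← hrw]
  refine Finset.analyticAt_fun_sum _ fun i _ => Finset.analyticAt_fun_sum _ fun j _ => ?_
  exact (h i j).smul analyticAt_const

lemma analyticAt_det {f : ℂ → Mat n} {x : ℂ}
    (h : ∀ i j, AnalyticAt ℂ (fun z => f z i j) x) :
    AnalyticAt ℂ (fun z => (f z).det) x := by
  simp only [Matrix.det_apply']
  refine Finset.analyticAt_fun_sum _ fun σ _ => ?_
  exact analyticAt_const.mul (Finset.analyticAt_fun_prod _ fun i _ => h (σ i) i)

lemma analyticAt_adjugate {f : ℂ → Mat n} {x : ℂ}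
    (h : ∀ i j, AnalyticAt ℂ (fun z => f z i j) x) (i j : Fin n) :
    AnalyticAt ℂ (fun z => (f z).adjugate i j) x := by
  simp only [Matrix.adjugate_apply]
  refine analyticAt_det (fun a b => ?_)
  by_cases hab : a = j
  · simp only [hab, Matrix.updateRow_self]
    exact analyticAt_const
  · simp only [Matrix.updateRow_ne hab]
    exact h a b

lemma analyticAt_polyEval (q : Polynomial ℂ) (x : ℂ) :
    AnalyticAt ℂ (fun z => q.eval z) x :=
  (AnalyticOnNhd.eval_polynomial (𝕜 := ℂ) q) x (Set.mem_univ x)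

lemma ratEval_eq (r : RatFunc ℂ) (z : ℂ) :
    ratEval r z = (r.num.eval z) / (r.denom.eval z) := rfl

lemma meromorphicAt_ratEval (r : RatFunc ℂ) (x : ℂ) : MeromorphicAt (ratEval r) x := by
  have : ratEval r = fun z => (r.num.eval z) / (r.denom.eval z) := rfl
  rw [this]
  exact ((analyticAt_polyEval r.num x).meromorphicAt).div
    ((analyticAt_polyEval r.denom x).meromorphicAt)

lemma meromorphicAt_sum {ι : Type*} (s : Finset ι) {f : ι → ℂ → ℂ} {x : ℂ}
    (h : ∀ i ∈ s, MeromorphicAt (f i) x) :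
    MeromorphicAt (fun z => ∑ i ∈ s, f i z) x := by
  classical
  induction s using Finset.induction with
  | empty => simpa using (MeromorphicAt.const (0 : ℂ) x)
  | insert a s' hni ih =>
    simp only [Finset.sum_insert hni]
    exact (h a (Finset.mem_insert_self a s')).add (ih fun i hi => h i (Finset.mem_insert_of_mem hi))

lemma meromorphicAt_comp_pow {f : ℂ → ℂ} {x : ℂ} {q : ℕ} (hq : 1 ≤ q)
    (hf : MeromorphicAt f (x ^ q)) : MeromorphicAt (fun z => f (z ^ q)) x := by
  have hq0 : q ≠ 0 := by omega
  rcases eq_or_ne x 0 with rfl | hx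
  · obtain ⟨m, hm⟩ := hf
    rw [zero_pow hq0] at hm
    refine ⟨q * m, ?_⟩
    have hg : AnalyticAt ℂ (fun z : ℂ => z ^ q) 0 := analyticAt_id.pow q
    have h2 := hm.comp_of_eq hg (by simp [zero_pow hq0])
    have heq : (fun z : ℂ => (z - 0) ^ (q * m) • (fun w => f (w ^ q)) z)
        = ((fun w => (w - 0) ^ m • f w) ∘ fun z : ℂ => z ^ q) := by
      funext z
      simp only [Function.comp_apply, sub_zero, smul_eq_mul, pow_mul]
    rw [heq]
    exact h2
  · obtain ⟨m, hm⟩ := hf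
    set v : ℂ → ℂ := fun z => ∑ k ∈ Finset.range q, z ^ k * x ^ (q - 1 - k) with hv
    have hvx : v x = (q : ℂ) * x ^ (q - 1) := by
      show (∑ k ∈ Finset.range q, x ^ k * x ^ (q - 1 - k)) = (q : ℂ) * x ^ (q - 1)
      have : ∀ k ∈ Finset.range q, x ^ k * x ^ (q - 1 - k) = x ^ (q - 1) := by
        intro k hk
        rw [← pow_add]
        congr 1
        have := Finset.mem_range.mp hk
        omega
      rw [Finset.sum_congr rfl this, Finset.sum_const, Finset.card_range, nsmul_eq_mul]
    have hvx0 : v x ≠ 0 := by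
      rw [hvx]
      exact mul_ne_zero (Nat.cast_ne_zero.mpr hq0) (pow_ne_zero _ hx)
    have hva : AnalyticAt ℂ v x :=
      Finset.analyticAt_fun_sum _ fun k _ => (analyticAt_id.pow k).mul analyticAt_const
    have hfactor : ∀ z : ℂ, z ^ q - x ^ q = v z * (z - x) := fun z => (geom_sum₂_mul z x q).symm
    have hcomp : AnalyticAt ℂ (fun z => (z ^ q - x ^ q) ^ m • f (z ^ q)) x := by
      have hg : AnalyticAt ℂ (fun z : ℂ => z ^ q) x := analyticAt_id.pow q
      have h2 := hm.comp_of_eq hg rfl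
      have heq : (fun z : ℂ => (z ^ q - x ^ q) ^ m • f (z ^ q))
          = ((fun w => (w - x ^ q) ^ m • f w) ∘ fun z : ℂ => z ^ q) := by
        funext z; simp [Function.comp_apply]
      rw [heq]
      exact h2
    have hmero : MeromorphicAt
        (fun z => (((z - x) ^ m)⁻¹ * ((v z) ^ m)⁻¹) * ((z ^ q - x ^ q) ^ m * f (z ^ q))) x := by
      have h1 : MeromorphicAt (fun z : ℂ => ((z - x) ^ m)⁻¹) x :=
        (((analyticAt_id.sub analyticAt_const).pow m).meromorphicAt).inv
      have h2 : MeromorphicAt (fun z : ℂ => ((v z) ^ m)⁻¹) x := ((hva.pow m).meromorphicAt).inv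
      have h3 : MeromorphicAt (fun z => (z ^ q - x ^ q) ^ m * f (z ^ q)) x := by
        have := hcomp.meromorphicAt
        simpa only [smul_eq_mul] using this
      exact (h1.mul h2).mul h3
    refine hmero.congr ?_
    have hev : ∀ᶠ z in 𝓝[≠] x, v z ≠ 0 :=
      (hva.continuousAt.eventually_ne hvx0).filter_mono nhdsWithin_le_nhds
    filter_upwards [hev, self_mem_nhdsWithin] with z hvz hz
    have hzx : z - x ≠ 0 := sub_ne_zero.mpr (by exact hz)
    rw [hfactor z, mul_pow]
    field_simp


lemma exists_psi (n p : ℕ) (hp : 2 ≤ p) (Bf : ℂ → Mat n)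
    (hB : AnalyticAt ℂ Bf 0) (hdet : IsUnit (Bf 0).det) :
    ∃ r : ℝ, 0 < r ∧ r ≤ 1 ∧ ∃ Ψ : ℂ → Mat n,
      (∀ x ∈ ball (0:ℂ) r, AnalyticAt ℂ Ψ x) ∧ Ψ 0 = 1 ∧
      ∀ z ∈ ball (0:ℂ) r, Bf z * Ψ z = Ψ (z ^ p) * Bf 0 := by
  classical
  have hdet0 : (Bf 0).det ≠ 0 := hdet.ne_zero
  have h1 : ∀ᶠ z in 𝓝 (0:ℂ), AnalyticAt ℂ Bf z := hB.eventually_analyticAt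
  have hdetA : AnalyticAt ℂ (fun z => (Bf z).det) 0 :=
    analyticAt_det (fun i j => analyticAt_entry hB i j)
  have h2 : ∀ᶠ z in 𝓝 (0:ℂ), (Bf z).det ≠ 0 := hdetA.continuousAt.eventually_ne hdet0
  obtain ⟨rA, hrA, hballA⟩ := Metric.eventually_nhds_iff_ball.mp (h1.and h2)
  set Binv : ℂ → Mat n := fun z => ((Bf z).det)⁻¹ • (Bf z).adjugate with hBinv_def
  have hkey : ∀ z : ℂ, (Bf z).det ≠ 0 → Bf z * Binv z = 1 ∧ Binv z * Bf z = 1 := by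
    intro z h
    have hinv : Binv z = (Bf z)⁻¹ := by
      rw [hBinv_def, Matrix.inv_def, Ring.inverse_eq_inv']
    have hu : IsUnit (Bf z).det := isUnit_iff_ne_zero.mpr h
    exact ⟨by rw [hinv]; exact Matrix.mul_nonsing_inv _ hu,
      by rw [hinv]; exact Matrix.nonsing_inv_mul _ hu⟩
  have hBinvA : ∀ z ∈ ball (0:ℂ) rA, AnalyticAt ℂ Binv z := by
    intro z hz
    obtain ⟨ha, hd⟩ := hballA z hz
    have hent : ∀ i j, AnalyticAt ℂ (fun w => Bf w i j) z := fun i j => analyticAt_entry ha i j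
    refine analyticAt_matrix (fun i j => ?_)
    have : (fun w => Binv w i j) = fun w => ((Bf w).det)⁻¹ * (Bf w).adjugate i j := rfl
    rw [this]
    exact ((analyticAt_det hent).inv hd).mul (analyticAt_adjugate hent i j)
  have hBinv0 : ContinuousAt Binv 0 := (hBinvA 0 (mem_ball_self hrA)).continuousAt
  set K : ℝ := ‖Binv 0‖ * ‖Bf 0‖ + 1 with hK_def
  have hKpos : 0 < K := by positivity
  have hKev : ∀ᶠ z in 𝓝 (0:ℂ), ‖Binv z‖ * ‖Bf 0‖ < K := by
    have hc : ContinuousAt (fun z => ‖Binv z‖ * ‖Bf 0‖) 0 := hBinv0.norm.mul continuousAt_const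
    exact hc.eventually_lt continuousAt_const (by rw [hK_def]; exact lt_add_one _)
  obtain ⟨rK, hrK, hballK0⟩ := Metric.eventually_nhds_iff_ball.mp hKev
  -- Lipschitz bound for Binv * Bf 0 - 1 near 0
  have hdiff0 : DifferentiableAt ℂ (fun z => Binv z * Bf 0) 0 :=
    ((hBinvA 0 (mem_ball_self hrA)).differentiableAt).mul (differentiableAt_const _)
  have hbig := hdiff0.hasFDerivAt.isBigO_sub
  obtain ⟨c, hc⟩ := hbig.bound
  have hone : Binv 0 * Bf 0 = 1 := (hkey 0 ((hballA 0 (mem_ball_self hrA)).2)).2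
  rw [hone] at hc
  obtain ⟨rc, hrc, hballc0⟩ := Metric.eventually_nhds_iff_ball.mp hc
  set c1 : ℝ := max c 1 with hc1_def
  have hc1pos : 0 < c1 := lt_of_lt_of_le one_pos (le_max_right _ _)
  set r : ℝ := min (min (rA/2) (min (rK/2) (rc/2))) (min (1/2) (1 / (2 * (K + c1)))) with hr_def
  have hrpos : 0 < r := by
    refine lt_min (lt_min (by linarith) (lt_min (by linarith) (by linarith))) (lt_min (by norm_num) ?_)
    positivity
  have hr1 : r ≤ 1 := le_trans (min_le_right _ _) (le_trans (min_le_left _ _) (by norm_num))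
  have hrrA : ∀ z : ℂ, ‖z‖ ≤ r → z ∈ ball (0:ℂ) rA := by
    intro z hz
    rw [mem_ball_zero_iff]
    have : r ≤ rA / 2 := le_trans (min_le_left _ _) (min_le_left _ _)
    linarith
  have hrK2 : ∀ z : ℂ, ‖z‖ ≤ r → ‖Binv z‖ * ‖Bf 0‖ ≤ K := by
    intro z hz
    refine le_of_lt (hballK0 z ?_)
    rw [mem_ball_zero_iff]
    have : r ≤ rK / 2 := le_trans (min_le_left _ _) (le_trans (min_le_right _ _) (min_le_left _ _))
    linarith
  have hlip : ∀ z : ℂ, ‖z‖ ≤ r → ‖Binv z * Bf 0 - 1‖ ≤ c1 * ‖z‖ := by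
    intro z hz
    have h1 : z ∈ ball (0:ℂ) rc := by
      rw [mem_ball_zero_iff]
      have : r ≤ rc / 2 :=
        le_trans (min_le_left _ _) (le_trans (min_le_right _ _) (min_le_right _ _))
      linarith
    have := hballc0 z h1
    simp only [sub_zero] at this
    calc ‖Binv z * Bf 0 - 1‖ ≤ c * ‖z‖ := this
      _ ≤ c1 * ‖z‖ := mul_le_mul_of_nonneg_right (le_max_left _ _) (norm_nonneg _)
  have hKr : K * r ≤ 1/2 := by
    have h1 : r ≤ 1 / (2 * (K + c1)) := le_trans (min_le_right _ _) (min_le_right _ _)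
    have h2 : 0 < K + c1 := by linarith
    rw [le_div_iff₀ (by linarith)] at h1
    have h3 : K * r ≤ K * (1 / (2 * (K + c1))) :=
      mul_le_mul_of_nonneg_left (le_trans (min_le_right _ _) (min_le_right _ _)) (le_of_lt hKpos)
    calc K * r ≤ K * (1 / (2 * (K + c1))) := h3
      _ = K / (2 * (K + c1)) := by ring
      _ ≤ 1/2 := by
        rw [div_le_div_iff₀ (by positivity) (by norm_num)]
        nlinarith
  -- the sequence of partial products
  set P : ℕ → ℂ → Mat n := fun N => Nat.rec (motive := fun _ => ℂ → Mat n)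
    (fun _ => 1) (fun _ Pp => fun z => Binv z * Pp (z ^ p) * Bf 0) N with hP_def
  have hP0 : ∀ z, P 0 z = 1 := fun _ => rfl
  have hPs : ∀ N z, P (N+1) z = Binv z * P N (z ^ p) * Bf 0 := fun _ _ => rfl
  have hmem : ∀ z : ℂ, ‖z‖ ≤ r → AnalyticAt ℂ Binv z ∧ (Bf z).det ≠ 0 := by
    intro z hz
    exact ⟨hBinvA z (hrrA z hz), (hballA z (hrrA z hz)).2⟩
  have hrstab : ∀ z : ℂ, ‖z‖ ≤ r → ‖z ^ p‖ ≤ r := by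
    intro z hz
    rw [norm_pow]
    calc ‖z‖ ^ p ≤ ‖z‖ ^ 1 :=
          pow_le_pow_of_le_one (norm_nonneg _) (le_trans hz hr1) (by omega)
      _ = ‖z‖ := pow_one _
      _ ≤ r := hz
  have hd : ∀ N, ∀ z : ℂ, ‖z‖ ≤ r → ‖P (N+1) z - P N z‖ ≤ c1 * K ^ N * ‖z‖ ^ p ^ N := by
    intro N
    induction N with
    | zero =>
      intro z hz
      have e1 : P 1 z = Binv z * Bf 0 := by
        have h := hPs 0 z
        rw [hP0, mul_one] at h
        exact h
      calc ‖P (0+1) z - P 0 z‖ = ‖Binv z * Bf 0 - 1‖ := by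
            rw [show P (0+1) z = Binv z * Bf 0 from e1, hP0]
        _ ≤ c1 * ‖z‖ := hlip z hz
        _ = c1 * K ^ 0 * ‖z‖ ^ p ^ 0 := by simp
    | succ N ih =>
      intro z hz
      have hstep : P (N+1+1) z - P (N+1) z
          = Binv z * (P (N+1) (z ^ p) - P N (z ^ p)) * Bf 0 := by
        rw [hPs (N+1) z, hPs N z, mul_sub, sub_mul]
      calc ‖P (N+1+1) z - P (N+1) z‖
          = ‖Binv z * (P (N+1) (z ^ p) - P N (z ^ p)) * Bf 0‖ := by rw [hstep]
        _ ≤ ‖Binv z * (P (N+1) (z ^ p) - P N (z ^ p))‖ * ‖Bf 0‖ := norm_mul_le _ _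
        _ ≤ ‖Binv z‖ * ‖P (N+1) (z ^ p) - P N (z ^ p)‖ * ‖Bf 0‖ :=
            mul_le_mul_of_nonneg_right (norm_mul_le _ _) (norm_nonneg _)
        _ = (‖Binv z‖ * ‖Bf 0‖) * ‖P (N+1) (z ^ p) - P N (z ^ p)‖ := by ring
        _ ≤ K * (c1 * K ^ N * ‖z ^ p‖ ^ p ^ N) :=
            mul_le_mul (hrK2 z hz) (ih (z ^ p) (hrstab z hz)) (norm_nonneg _) (le_of_lt hKpos)
        _ = c1 * K ^ (N+1) * (‖z‖ ^ p) ^ p ^ N := by rw [norm_pow]; ring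
        _ = c1 * K ^ (N+1) * ‖z‖ ^ p ^ (N+1) := by
            rw [← pow_mul, ← pow_succ']
  set u : ℕ → ℝ := fun N => (c1 * r) * (1/2) ^ N with hu_def
  have hu : Summable u := (summable_geometric_two).mul_left _
  have hub : ∀ N, ∀ z : ℂ, z ∈ closedBall (0:ℂ) r → ‖P (N+1) z - P N z‖ ≤ u N := by
    intro N z hz
    rw [mem_closedBall_zero_iff] at hz
    have hp1 : (N+1 : ℕ) ≤ p ^ N := by
      calc (N+1 : ℕ) ≤ 2 ^ N := Nat.succ_le_of_lt (Nat.lt_two_pow_self (n := N))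
        _ ≤ p ^ N := Nat.pow_le_pow_left hp N
    calc ‖P (N+1) z - P N z‖ ≤ c1 * K ^ N * ‖z‖ ^ p ^ N := hd N z hz
      _ ≤ c1 * K ^ N * r ^ p ^ N := by
          refine mul_le_mul_of_nonneg_left (pow_le_pow_left₀ (norm_nonneg _) hz _) ?_
          positivity
      _ ≤ c1 * K ^ N * r ^ (N+1) := by
          refine mul_le_mul_of_nonneg_left
            (pow_le_pow_of_le_one (le_of_lt hrpos) hr1 hp1) ?_
          positivity
      _ = (c1 * r) * (K * r) ^ N := by
          rw [mul_pow, pow_succ]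
          ring
      _ ≤ (c1 * r) * (1/2) ^ N := by
          refine mul_le_mul_of_nonneg_left (pow_le_pow_left₀ ?_ hKr _) ?_
          · positivity
          · positivity
  set Ψ : ℂ → Mat n := fun z => 1 + ∑' N, (P (N+1) z - P N z) with hΨ_def
  have hTU := tendstoUniformlyOn_tsum_nat hu (fun N z hz => hub N z hz)
  have hTU' : TendstoUniformlyOn (fun N z => P N z) Ψ atTop (closedBall (0:ℂ) r) := by
    have h1 : TendstoUniformlyOn (fun (N : ℕ) z => (1 : Mat n) + ∑ k ∈ Finset.range N,
        (P (k+1) z - P k z)) Ψ atTop (closedBall (0:ℂ) r) := by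
      have hconst : TendstoUniformlyOn (fun (_ : ℕ) (_ : ℂ) => (1 : Mat n))
          (fun _ => (1 : Mat n)) atTop (closedBall (0:ℂ) r) :=
        (tendsto_const_nhds : Tendsto (fun _ : ℕ => (1 : Mat n)) atTop
          (𝓝 1)).tendstoUniformlyOn_const _
      exact hconst.add hTU
    refine h1.congr (Eventually.of_forall (fun N z hz => ?_))
    show (1 : Mat n) + ∑ k ∈ Finset.range N, (P (k+1) z - P k z) = P N z
    rw [Finset.sum_range_sub (f := fun k => P k z), hP0]
    abel
  have hPdiff : ∀ N, DifferentiableOn ℂ (P N) (ball (0:ℂ) r) := by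
    intro N
    induction N with
    | zero =>
      have : P 0 = fun _ => (1 : Mat n) := rfl
      rw [this]
      exact differentiableOn_const _
    | succ N ih =>
      intro z hz
      have hz' : ‖z‖ ≤ r := le_of_lt (mem_ball_zero_iff.mp hz)
      have h1 : DifferentiableAt ℂ Binv z := ((hmem z hz').1).differentiableAt
      have hzp : z ^ p ∈ ball (0:ℂ) r := by
        rw [mem_ball_zero_iff, norm_pow]
        calc ‖z‖ ^ p ≤ ‖z‖ ^ 1 :=
              pow_le_pow_of_le_one (norm_nonneg _) (le_trans hz' hr1) (by omega)
          _ = ‖z‖ := pow_one _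
          _ < r := mem_ball_zero_iff.mp hz
      have h2 : DifferentiableAt ℂ (fun w : ℂ => P N (w ^ p)) z := by
        have hPN : DifferentiableAt ℂ (P N) (z ^ p) :=
          ih.differentiableAt (isOpen_ball.mem_nhds hzp)
        exact hPN.comp z (differentiableAt_pow p)
      have hdfa : DifferentiableAt ℂ (fun w => Binv w * P N (w ^ p) * Bf 0) z :=
        (h1.mul h2).mul (differentiableAt_const _)
      exact hdfa.differentiableWithinAt
  have hΨdiff : DifferentiableOn ℂ Ψ (ball (0:ℂ) r) :=
    (hTU'.tendstoLocallyUniformlyOn.mono ball_subset_closedBall).differentiableOn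
      (Eventually.of_forall hPdiff) isOpen_ball
  have hΨan : ∀ x ∈ ball (0:ℂ) r, AnalyticAt ℂ Ψ x := fun x hx =>
    hΨdiff.analyticAt (isOpen_ball.mem_nhds hx)
  have hdet00 : (Bf 0).det ≠ 0 := hdet0
  have hP0' : ∀ N, P N 0 = 1 := by
    intro N
    induction N with
    | zero => exact hP0 0
    | succ N ih =>
      rw [hPs]
      have h0p : (0:ℂ) ^ p = 0 := zero_pow (by omega)
      rw [h0p, ih, mul_one]
      exact (hkey 0 hdet00).2
  have h0mem : (0:ℂ) ∈ closedBall (0:ℂ) r := mem_closedBall_self (le_of_lt hrpos)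
  have hΨ0 : Ψ 0 = 1 := by
    have t1 : Tendsto (fun N => P N 0) atTop (𝓝 (Ψ 0)) := hTU'.tendsto_at h0mem
    have t1' : Tendsto (fun _ : ℕ => (1 : Mat n)) atTop (𝓝 (Ψ 0)) :=
      Tendsto.congr (fun N => hP0' N) t1
    exact tendsto_nhds_unique t1' tendsto_const_nhds
  refine ⟨r, hrpos, hr1, Ψ, hΨan, hΨ0, ?_⟩
  intro z hz
  have hz' : ‖z‖ ≤ r := le_of_lt (mem_ball_zero_iff.mp hz)
  have hzc : z ∈ closedBall (0:ℂ) r := mem_closedBall_zero_iff.mpr hz'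
  have hzpc : z ^ p ∈ closedBall (0:ℂ) r := mem_closedBall_zero_iff.mpr (hrstab z hz')
  have t1 : Tendsto (fun N => P N z) atTop (𝓝 (Ψ z)) := hTU'.tendsto_at hzc
  have t2 : Tendsto (fun N => P N (z ^ p)) atTop (𝓝 (Ψ (z ^ p))) := hTU'.tendsto_at hzpc
  have tA : Tendsto (fun N => Bf z * P (N+1) z) atTop (𝓝 (Bf z * Ψ z)) := by
    have := (t1.comp (tendsto_add_atTop_nat 1)).const_mul (Bf z)
    simpa [Function.comp] using this
  have tB : Tendsto (fun N => P N (z ^ p) * Bf 0) atTop (𝓝 (Ψ (z ^ p) * Bf 0)) :=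
    t2.mul_const _
  have heq : ∀ N, Bf z * P (N+1) z = P N (z ^ p) * Bf 0 := by
    intro N
    rw [hPs N z, ← mul_assoc, ← mul_assoc, (hkey z (hmem z hz').2).1, one_mul]
  exact tendsto_nhds_unique (Tendsto.congr heq tA) tB




lemma denom_eval_ne_of_dvd {a b : Polynomial ℂ} (h : a ∣ b) {w : ℂ}
    (hb : b.eval w ≠ 0) : a.eval w ≠ 0 := by
  obtain ⟨c, rfl⟩ := h
  intro h0
  apply hb
  rw [Polynomial.eval_mul, h0, zero_mul]

lemma ratEval_sum {n : ℕ} (s : Finset (Fin n)) (g : Fin n → RatFunc ℂ) {w : ℂ}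
    (h : ∀ k, Polynomial.eval w (g k).denom ≠ 0) :
    Polynomial.eval w (∑ k ∈ s, g k).denom ≠ 0 ∧
      ratEval (∑ k ∈ s, g k) w = ∑ k ∈ s, ratEval (g k) w := by
  classical
  induction s using Finset.induction with
  | empty => simp [ratEval]
  | insert a s' hni ih =>
    constructor
    · rw [Finset.sum_insert hni]
      refine denom_eval_ne_of_dvd (RatFunc.denom_add_dvd _ _) ?_
      rw [Polynomial.eval_mul]
      exact mul_ne_zero (h a) ih.1
    · rw [Finset.sum_insert hni, Finset.sum_insert hni]
      have hadd : ratEval (g a + ∑ k ∈ s', g k) w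
          = ratEval (g a) w + ratEval (∑ k ∈ s', g k) w :=
        RatFunc.eval_add (f := RingHom.id ℂ) (a := w) (h a) ih.1
      rw [hadd, ih.2]

lemma ratEval_matrix_mul {n : ℕ} (M N : Matrix (Fin n) (Fin n) (RatFunc ℂ)) {w : ℂ}
    (hM : ∀ i j, Polynomial.eval w (M i j).denom ≠ 0)
    (hN : ∀ i j, Polynomial.eval w (N i j).denom ≠ 0) :
    (Matrix.of fun i j => ratEval ((M * N) i j) w)
      = (Matrix.of fun i j => ratEval (M i j) w) * (Matrix.of fun i j => ratEval (N i j) w) := by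
  ext i j
  have hden : ∀ k, Polynomial.eval w ((M i k * N k j).denom) ≠ 0 := by
    intro k
    refine denom_eval_ne_of_dvd (RatFunc.denom_mul_dvd _ _) ?_
    rw [Polynomial.eval_mul]
    exact mul_ne_zero (hM i k) (hN k j)
  simp only [Matrix.of_apply, Matrix.mul_apply]
  rw [(ratEval_sum Finset.univ (fun k => M i k * N k j) hden).2]
  refine Finset.sum_congr rfl (fun k _ => ?_)
  exact RatFunc.eval_mul (f := RingHom.id ℂ) (a := w) (hM i k) (hN k j)

lemma ratEval_one_matrix {n : ℕ} (w : ℂ) :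
    (Matrix.of fun i j : Fin n => ratEval ((1 : Matrix (Fin n) (Fin n) (RatFunc ℂ)) i j) w)
      = (1 : Mat n) := by
  ext i j
  simp only [Matrix.of_apply, Matrix.one_apply]
  by_cases h : i = j <;> simp [h, ratEval]

lemma sbad_discrete (p : ℕ) (hp : 2 ≤ p) (q : Polynomial ℂ) (hq : q ≠ 0) {x : ℂ} (hx : ‖x‖ < 1) :
    ∀ᶠ w in 𝓝[≠] x,
      w ∈ ball (0:ℂ) 1 ∧ ¬(w = 0 ∨ ∃ k : ℕ, q.eval (w ^ p ^ k) = 0) := by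
  classical
  set ρ : ℝ := (‖x‖ + 1)/2 with hρ_def
  have hρ0 : 0 < ρ := by positivity
  have hρ1 : ρ < 1 := by rw [hρ_def]; linarith
  have hxρ : ‖x‖ < ρ := by rw [hρ_def]; linarith
  set R : Finset ℂ := q.roots.toFinset with hR_def
  have hRmem : ∀ t : ℂ, q.eval t = 0 → t ∈ R := by
    intro t ht
    rw [hR_def, Multiset.mem_toFinset, Polynomial.mem_roots hq]
    exact ht
  set m : ℝ := if h : (R.erase 0).Nonempty then (R.erase 0).inf' h (fun ξ => ‖ξ‖) else 1
    with hm_def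
  have hm0 : 0 < m := by
    rw [hm_def]
    split_ifs with h
    · rw [Finset.lt_inf'_iff]
      intro ξ hξ
      exact norm_pos_iff.mpr (Finset.mem_erase.mp hξ).1
    · norm_num
  obtain ⟨K₀, hK₀⟩ := ((tendsto_pow_atTop_nhds_zero_of_lt_one (le_of_lt hρ0)
    hρ1).eventually (gt_mem_nhds hm0)).exists_forall_of_atTop
  have hrootsfin : ∀ k : ℕ, ∀ ξ : ℂ, {w : ℂ | w ^ p ^ k = ξ}.Finite := by
    intro k ξ
    have hne : ((Polynomial.X : Polynomial ℂ) ^ p ^ k - Polynomial.C ξ) ≠ 0 :=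
      Polynomial.X_pow_sub_C_ne_zero (pow_pos (by omega) k) ξ
    refine Set.Finite.subset (((Polynomial.X : Polynomial ℂ) ^ p ^ k
      - Polynomial.C ξ).roots.toFinset.finite_toSet) ?_
    intro w hw
    simp only [Finset.coe_sort_coe, Multiset.mem_toFinset, Finset.mem_coe]
    rw [Polynomial.mem_roots hne]
    simp only [Polynomial.IsRoot.def, Polynomial.eval_sub, Polynomial.eval_pow,
      Polynomial.eval_X, Polynomial.eval_C, sub_eq_zero]
    exact hw
  set Bad : Set ℂ := {0} ∪ ⋃ (k : ℕ) (_ : k ∈ Finset.range (K₀+1)) (ξ : ℂ) (_ : ξ ∈ R),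
    {w : ℂ | w ^ p ^ k = ξ} with hBad_def
  have hBadFin : Bad.Finite := by
    refine (Set.finite_singleton 0).union ?_
    refine Set.Finite.biUnion ((Finset.range (K₀+1)).finite_toSet) (fun k _ => ?_)
    exact Set.Finite.biUnion R.finite_toSet (fun ξ _ => hrootsfin k ξ)
  have hsub : ∀ w : ℂ, ‖w‖ ≤ ρ → (w = 0 ∨ ∃ k : ℕ, q.eval (w ^ p ^ k) = 0) → w ∈ Bad := by
    intro w hw h
    rcases h with rfl | ⟨k, hk⟩
    · exact Or.inl rfl
    rcases eq_or_ne w 0 with rfl | hw0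
    · exact Or.inl rfl
    have hmem : w ^ p ^ k ∈ R := hRmem _ hk
    by_cases hkK : k ≤ K₀
    · refine Or.inr ?_
      rw [Set.mem_iUnion]
      refine ⟨k, ?_⟩
      rw [Set.mem_iUnion]
      refine ⟨Finset.mem_range.mpr (by omega), ?_⟩
      rw [Set.mem_iUnion]
      exact ⟨w ^ p ^ k, Set.mem_iUnion.mpr ⟨hmem, rfl⟩⟩
    · exfalso
      have hne : (R.erase 0).Nonempty :=
        ⟨w ^ p ^ k, Finset.mem_erase.mpr ⟨pow_ne_zero _ hw0, hmem⟩⟩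
      have hm_le : m ≤ ‖w ^ p ^ k‖ := by
        rw [hm_def, dif_pos hne]
        exact Finset.inf'_le _ (Finset.mem_erase.mpr ⟨pow_ne_zero _ hw0, hmem⟩)
      have hb1 : ‖w ^ p ^ k‖ ≤ ρ ^ p ^ k := by
        rw [norm_pow]
        exact pow_le_pow_left₀ (norm_nonneg _) hw _
      have hb2 : ρ ^ p ^ k ≤ ρ ^ k :=
        pow_le_pow_of_le_one (le_of_lt hρ0) (le_of_lt hρ1)
          (Nat.le_of_lt (Nat.lt_pow_self (n := k) (by omega)))
      have hb3 : ρ ^ k < m := hK₀ k (by omega)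
      linarith
  have h1 : ∀ᶠ w in 𝓝 x, w ∈ ball (0:ℂ) ρ :=
    isOpen_ball.eventually_mem (mem_ball_zero_iff.mpr hxρ)
  have h2 : ∀ᶠ w in 𝓝 x, w ∉ (Bad \ {x} : Set ℂ) := by
    have hD : (Bad \ {x} : Set ℂ).Finite := hBadFin.diff
    have hcl : IsClosed (Bad \ {x} : Set ℂ) := hD.isClosed
    have hxD : x ∉ (Bad \ {x} : Set ℂ) := fun h => h.2 rfl
    exact hcl.isOpen_compl.eventually_mem hxD
  filter_upwards [((h1.and h2).filter_mono nhdsWithin_le_nhds), self_mem_nhdsWithin]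
    with w hw hwx
  obtain ⟨hwρ, hwD⟩ := hw
  have hwx' : w ≠ x := hwx
  constructor
  · exact mem_ball_zero_iff.mpr (lt_trans (mem_ball_zero_iff.mp hwρ) hρ1)
  · intro hcon
    exact hwD ⟨hsub w (le_of_lt (mem_ball_zero_iff.mp hwρ)) hcon, hwx'⟩


end MahlerAux


open MahlerAux

/-- Let `p ≥ 2` and let `A ∈ GLₙ(ℂ(z))` be such that the Mahler
system `φ_p(Y) = AY` is regular singular at `0`: there is a matrix `T` of germs of
meromorphic functions at `0`, with determinant not identically zero, such that
`T(z^p)⁻¹·A(z)·T(z)` is regular at `0` (i.e. `A(z)·T(z) = T(z^p)·B(z)` near `0` for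
some `B` holomorphic at `0` with `B(0)` invertible). Then there are a matrix `F₀` of
meromorphic functions on the open unit disk with determinant not identically zero and
a constant matrix `A₀ ∈ GLₙ(ℂ)` with `A(z)·F₀(z) = F₀(z^p)·A₀` on `D(0,1)`. -/
theorem mahler_regular_singular_at_zero_constant_form
    (p n : ℕ) (hp : 2 ≤ p)
    (A : Matrix (Fin n) (Fin n) (RatFunc ℂ))
    (hAdet : A.det ≠ 0)
    (hrs : ∃ T : Matrix (Fin n) (Fin n) (ℂ → ℂ),
      (∀ i j, MeromorphicAt (T i j) 0) ∧
      (∃ᶠ z in 𝓝[≠] (0 : ℂ), (Matrix.of fun i j => T i j z).det ≠ 0) ∧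
      ∃ B : Matrix (Fin n) (Fin n) (ℂ → ℂ),
        (∀ i j, AnalyticAt ℂ (B i j) 0) ∧
        IsUnit (Matrix.of fun i j => B i j 0).det ∧
        ∀ᶠ z in 𝓝[≠] (0 : ℂ),
          (Matrix.of fun i j => ratEval (A i j) z) * (Matrix.of fun i j => T i j z)
            = (Matrix.of fun i j => T i j (z ^ p)) * (Matrix.of fun i j => B i j z)) :
    ∃ F₀ : Matrix (Fin n) (Fin n) (ℂ → ℂ),
      (∀ i j, MeromorphicOn (F₀ i j) (ball (0 : ℂ) 1)) ∧
      (∃ z ∈ ball (0 : ℂ) 1, (∀ i j, AnalyticAt ℂ (F₀ i j) z) ∧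
        (Matrix.of fun i j => F₀ i j z).det ≠ 0) ∧
      ∃ A₀ : Matrix (Fin n) (Fin n) ℂ, IsUnit A₀.det ∧
        ∀ z ∈ ball (0 : ℂ) 1,
          (∀ i j, Polynomial.eval z (A i j).denom ≠ 0) →
          (∀ i j, AnalyticAt ℂ (F₀ i j) z) →
          (∀ i j, AnalyticAt ℂ (F₀ i j) (z ^ p)) →
          (Matrix.of fun i j => ratEval (A i j) z) * (Matrix.of fun i j => F₀ i j z)
            = (Matrix.of fun i j => F₀ i j (z ^ p)) * A₀ := by
  classical
  obtain ⟨T, hT, hTdet, B, hB, hB0, heq⟩ := hrs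
  have hp1 : 1 ≤ p := by omega
  have hpne : p ≠ 0 := by omega
  set Amat : ℂ → Mat n := fun w => Matrix.of fun i j => ratEval (A i j) w with hAmat_def
  set Tmat : ℂ → Mat n := fun w => Matrix.of fun i j => T i j w with hTmat_def
  set Bf : ℂ → Mat n := fun w => Matrix.of fun i j => B i j w with hBf_def
  have hBfan : AnalyticAt ℂ Bf 0 := analyticAt_matrix (fun i j => hB i j)
  have hBf0 : IsUnit (Bf 0).det := hB0
  obtain ⟨r₀, hr₀, hr₀1, Ψ, hΨan, hΨ0, hΨfe⟩ := exists_psi n p hp Bf hBfan hBf0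
  obtain ⟨s₁, hs₁, hseq⟩ := Metric.eventually_nhds_iff_ball.mp (eventually_nhdsWithin_iff.mp heq)
  have hTanA : ∀ᶠ w in 𝓝[≠] (0:ℂ), ∀ i j, AnalyticAt ℂ (T i j) w := by
    rw [eventually_all]
    intro i
    rw [eventually_all]
    intro j
    exact (hT i j).eventually_analyticAt
  obtain ⟨s₂, hs₂, hTan'⟩ := Metric.eventually_nhds_iff_ball.mp (eventually_nhdsWithin_iff.mp hTanA)
  set r : ℝ := min r₀ (min s₁ s₂) with hr_def
  have hrpos : 0 < r := lt_min hr₀ (lt_min hs₁ hs₂)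
  have hr1 : r ≤ 1 := le_trans (min_le_left _ _) hr₀1
  have hrr₀ : r ≤ r₀ := min_le_left _ _
  have hrs₁ : r ≤ s₁ := le_trans (min_le_right _ _) (min_le_left _ _)
  have hrs₂ : r ≤ s₂ := le_trans (min_le_right _ _) (min_le_right _ _)
  set B₀ : Mat n := Bf 0 with hB₀_def
  set F : ℂ → Mat n := fun w => Tmat w * Ψ w with hF_def
  -- the local equation
  have hLE : ∀ w : ℂ, w ≠ 0 → ‖w‖ < r → Amat w * F w = F (w ^ p) * B₀ := by
    intro w hw0 hwr
    have h1 : Amat w * Tmat w = Tmat (w ^ p) * Bf w :=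
      hseq w (mem_ball_zero_iff.mpr (lt_of_lt_of_le hwr hrs₁)) hw0
    have h2 : Bf w * Ψ w = Ψ (w ^ p) * B₀ :=
      hΨfe w (mem_ball_zero_iff.mpr (lt_of_lt_of_le hwr hrr₀))
    calc Amat w * (Tmat w * Ψ w) = (Amat w * Tmat w) * Ψ w := (mul_assoc _ _ _).symm
      _ = (Tmat (w ^ p) * Bf w) * Ψ w := by rw [h1]
      _ = Tmat (w ^ p) * (Bf w * Ψ w) := mul_assoc _ _ _
      _ = Tmat (w ^ p) * (Ψ (w ^ p) * B₀) := by rw [h2]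
      _ = (Tmat (w ^ p) * Ψ (w ^ p)) * B₀ := (mul_assoc _ _ _).symm
  -- inverse of A over the rational function field
  have hAu : IsUnit A.det := isUnit_iff_ne_zero.mpr hAdet
  set A' : Matrix (Fin n) (Fin n) (RatFunc ℂ) := A⁻¹ with hA'_def
  set A'mat : ℂ → Mat n := fun w => Matrix.of fun i j => ratEval (A' i j) w with hA'mat_def
  set q : Polynomial ℂ := (∏ i : Fin n, ∏ j : Fin n, (A i j).denom)
      * (∏ i : Fin n, ∏ j : Fin n, (A' i j).denom) with hq_def
  have hq0 : q ≠ 0 := by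
    refine mul_ne_zero ?_ ?_ <;>
      exact Finset.prod_ne_zero_iff.mpr fun i _ =>
        Finset.prod_ne_zero_iff.mpr fun j _ => RatFunc.denom_ne_zero _
  have hdenA : ∀ w : ℂ, q.eval w ≠ 0 → ∀ i j, Polynomial.eval w (A i j).denom ≠ 0 := by
    intro w hw i j
    refine denom_eval_ne_of_dvd ?_ hw
    refine Dvd.dvd.mul_right ?_ _
    have h1 : (A i j).denom ∣ ∏ j' : Fin n, (A i j').denom :=
      Finset.dvd_prod_of_mem _ (Finset.mem_univ j)
    have h2 : (∏ j' : Fin n, (A i j').denom) ∣ ∏ i' : Fin n, ∏ j' : Fin n, (A i' j').denom :=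
      Finset.dvd_prod_of_mem (fun i' => ∏ j' : Fin n, (A i' j').denom) (Finset.mem_univ i)
    exact h1.trans h2
  have hdenA' : ∀ w : ℂ, q.eval w ≠ 0 → ∀ i j, Polynomial.eval w (A' i j).denom ≠ 0 := by
    intro w hw i j
    refine denom_eval_ne_of_dvd ?_ hw
    refine Dvd.dvd.mul_left ?_ _
    have h1 : (A' i j).denom ∣ ∏ j' : Fin n, (A' i j').denom :=
      Finset.dvd_prod_of_mem _ (Finset.mem_univ j)
    have h2 : (∏ j' : Fin n, (A' i j').denom) ∣ ∏ i' : Fin n, ∏ j' : Fin n, (A' i' j').denom :=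
      Finset.dvd_prod_of_mem (fun i' => ∏ j' : Fin n, (A' i' j').denom) (Finset.mem_univ i)
    exact h1.trans h2
  have hmulId : ∀ w : ℂ, q.eval w ≠ 0 → Amat w * A'mat w = 1 ∧ A'mat w * Amat w = 1 := by
    intro w hw
    constructor
    · have h1 := ratEval_matrix_mul A A' (hdenA w hw) (hdenA' w hw)
      rw [← h1, show A * A' = 1 from Matrix.mul_nonsing_inv A hAu]
      exact ratEval_one_matrix w
    · have h1 := ratEval_matrix_mul A' A (hdenA' w hw) (hdenA w hw)
      rw [← h1, show A' * A = 1 from Matrix.nonsing_inv_mul A hAu]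
      exact ratEval_one_matrix w
  -- the bad set
  set SBad : Set ℂ := {w : ℂ | w = 0 ∨ ∃ k : ℕ, q.eval (w ^ p ^ k) = 0} with hSBad_def
  have hS0 : (0:ℂ) ∈ SBad := Or.inl rfl
  have hSne : ∀ w : ℂ, w ∉ SBad → w ≠ 0 := fun w hw h0 => hw (Or.inl h0)
  have hSq : ∀ w : ℂ, w ∉ SBad → q.eval w ≠ 0 := by
    intro w hw hq
    exact hw (Or.inr ⟨0, by simpa [pow_zero, pow_one] using hq⟩)
  have hSpow : ∀ w : ℂ, w ∉ SBad → w ^ p ∉ SBad := by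
    intro w hw hcon
    rcases hcon with h0 | ⟨k, hk⟩
    · exact hw (Or.inl (pow_eq_zero_iff hpne |>.mp h0))
    · refine hw (Or.inr ⟨k+1, ?_⟩)
      rwa [pow_succ', pow_mul]
  -- iterated pullbacks
  set G : ℕ → ℂ → Mat n := fun K => Nat.rec (motive := fun _ => ℂ → Mat n) F
    (fun _ Gp => fun w => A'mat w * Gp (w ^ p) * B₀) K with hG_def
  have hG0 : ∀ w, G 0 w = F w := fun _ => rfl
  have hGs : ∀ K w, G (K+1) w = A'mat w * G K (w ^ p) * B₀ := fun _ _ => rfl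
  have hnormp : ∀ w : ℂ, ‖w‖ < r → ‖w ^ p‖ < r := by
    intro w hw
    rw [norm_pow]
    calc ‖w‖ ^ p ≤ ‖w‖ ^ 1 :=
        pow_le_pow_of_le_one (norm_nonneg _) (le_trans (le_of_lt hw) hr1) hp1
      _ = ‖w‖ := pow_one _
      _ < r := hw
  have hpowsucc : ∀ (w : ℂ) (K : ℕ), w ^ p ^ (K+1) = (w ^ p) ^ p ^ K := by
    intro w K
    rw [pow_succ', pow_mul]
  have hnormpow : ∀ (w : ℂ) (K : ℕ), ‖w ^ p ^ K‖ < r → ‖w ^ p ^ (K+1)‖ < r := by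
    intro w K hK
    rw [pow_succ, pow_mul]
    exact hnormp _ hK
  have hradmono : ∀ (w : ℂ) (K K' : ℕ), K ≤ K' → ‖w ^ p ^ K‖ < r → ‖w ^ p ^ K'‖ < r := by
    intro w K K' hKK'
    induction hKK' with
    | refl => exact fun h => h
    | @step m h ih =>
      exact fun hyp => hnormpow w m (ih hyp)
  have hGstep : ∀ K, ∀ w : ℂ, w ∉ SBad → ‖w ^ p ^ K‖ < r → G K w = G (K+1) w := by
    intro K
    induction K with
    | zero =>
      intro w hw hwr
      have hwr' : ‖w‖ < r := by simpa [pow_zero, pow_one] using hwr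
      rw [hGs 0 w, hG0, hG0]
      have hle := hLE w (hSne w hw) hwr'
      have h2 := hmulId w (hSq w hw)
      calc F w = 1 * F w := (one_mul _).symm
        _ = (A'mat w * Amat w) * F w := by rw [h2.2]
        _ = A'mat w * (Amat w * F w) := mul_assoc _ _ _
        _ = A'mat w * (F (w ^ p) * B₀) := by rw [hle]
        _ = A'mat w * F (w ^ p) * B₀ := (mul_assoc _ _ _).symm
    | succ K ih =>
      intro w hw hwr
      rw [hGs (K+1) w, hGs K w]
      have hwp : ‖(w ^ p) ^ p ^ K‖ < r := by
        rw [← hpowsucc]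
        exact hwr
      rw [ih (w ^ p) (hSpow w hw) hwp]
  have hGmono : ∀ (K K' : ℕ), K ≤ K' → ∀ w : ℂ, w ∉ SBad → ‖w ^ p ^ K‖ < r →
      G K w = G K' w := by
    intro K K' hKK'
    induction hKK' with
    | refl => exact fun w _ _ => rfl
    | @step m h ih =>
      intro w hw hwr
      rw [ih w hw hwr]
      exact hGstep m w hw (hradmono w K m h hwr)
  have hex : ∀ w : ℂ, ‖w‖ < 1 → ∃ K, ‖w ^ p ^ K‖ < r := by
    intro w hw
    obtain ⟨K, hK⟩ := ((tendsto_pow_atTop_nhds_zero_of_lt_one (norm_nonneg w)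
      hw).eventually (gt_mem_nhds hrpos)).exists
    refine ⟨K, ?_⟩
    rw [norm_pow]
    calc ‖w‖ ^ p ^ K ≤ ‖w‖ ^ K :=
        pow_le_pow_of_le_one (norm_nonneg _) (le_of_lt hw)
          (Nat.le_of_lt (Nat.lt_pow_self (n := K) (by omega)))
      _ < r := hK
  set F₀mat : ℂ → Mat n := fun w =>
    if h : ∃ K, ‖w ^ p ^ K‖ < r then G (Nat.find h) w else 1 with hF₀mat_def
  have hF₀G : ∀ w : ℂ, w ∉ SBad → ∀ K, ‖w ^ p ^ K‖ < r → F₀mat w = G K w := by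
    intro w hw K hK
    have hex' : ∃ K, ‖w ^ p ^ K‖ < r := ⟨K, hK⟩
    show (if h : ∃ K, ‖w ^ p ^ K‖ < r then G (Nat.find h) w else 1) = G K w
    rw [dif_pos hex']
    exact hGmono (Nat.find hex') K (Nat.find_min' hex' hK) w hw (Nat.find_spec hex')
  have hF₀F : ∀ w : ℂ, ‖w‖ < r → F₀mat w = F w := by
    intro w hw
    have hw0 : ‖w ^ p ^ 0‖ < r := by simpa [pow_zero, pow_one] using hw
    have hex' : ∃ K, ‖w ^ p ^ K‖ < r := ⟨0, hw0⟩
    show (if h : ∃ K, ‖w ^ p ^ K‖ < r then G (Nat.find h) w else 1) = F w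
    rw [dif_pos hex', (Nat.find_eq_zero hex').mpr hw0, hG0]
  have hEQ : ∀ w : ℂ, ‖w‖ < 1 → w ∉ SBad → Amat w * F₀mat w = F₀mat (w ^ p) * B₀ := by
    intro w hw1 hw
    have hex' := hex w hw1
    cases hfind : Nat.find hex' with
    | zero =>
      have hwr : ‖w‖ < r := by
        have := Nat.find_spec hex'
        rw [hfind] at this
        simpa [pow_zero, pow_one] using this
      rw [hF₀F w hwr, hF₀F (w ^ p) (hnormp w hwr)]
      exact hLE w (hSne w hw) hwr
    | succ K =>
      have hspec := Nat.find_spec hex'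
      rw [hfind] at hspec
      have hwp : ‖(w ^ p) ^ p ^ K‖ < r := by rw [← hpowsucc]; exact hspec
      have h1 : F₀mat w = G (K+1) w := by
        rw [hF₀G w hw (Nat.find hex') (Nat.find_spec hex'), hfind]
      have h2 : F₀mat (w ^ p) = G K (w ^ p) := hF₀G (w ^ p) (hSpow w hw) K hwp
      rw [h1, h2, hGs K w]
      rw [← mul_assoc, ← mul_assoc, (hmulId w (hSq w hw)).1, one_mul]
  -- meromorphy of the pullbacks
  have hGmero : ∀ K, ∀ x : ℂ, ‖x ^ p ^ K‖ < r → ∀ i j,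
      MeromorphicAt (fun w => G K w i j) x := by
    intro K
    induction K with
    | zero =>
      intro x hx i j
      have hxr : ‖x‖ < r := by simpa [pow_zero, pow_one] using hx
      have hfun : (fun w => G 0 w i j) = fun w => ∑ k : Fin n, T i k w * Ψ w k j := by
        funext w
        rw [hG0 w]
        simp [hF_def, Matrix.mul_apply, hTmat_def]
      rw [hfun]
      refine meromorphicAt_sum Finset.univ (fun k _ => ?_)
      have hΨk : AnalyticAt ℂ (fun w => Ψ w k j) x :=
        analyticAt_entry (hΨan x (mem_ball_zero_iff.mpr (lt_of_lt_of_le hxr hrr₀))) k j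
      rcases eq_or_ne x 0 with rfl | hx0
      · exact (hT i k).mul hΨk.meromorphicAt
      · have hTan2 : AnalyticAt ℂ (T i k) x :=
          (hTan' x (mem_ball_zero_iff.mpr (lt_of_lt_of_le hxr hrs₂)) hx0) i k
        exact hTan2.meromorphicAt.mul hΨk.meromorphicAt
    | succ K ih =>
      intro x hx i j
      have hxp : ‖(x ^ p) ^ p ^ K‖ < r := by rw [← hpowsucc]; exact hx
      have hfun : (fun w => G (K+1) w i j)
          = fun w => ∑ b : Fin n, (∑ a : Fin n, ratEval (A' i a) w * G K (w ^ p) a b)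
              * B₀ b j := by
        funext w
        rw [hGs K w]
        simp [Matrix.mul_apply, hA'mat_def]
      rw [hfun]
      refine meromorphicAt_sum Finset.univ (fun b _ =>
        MeromorphicAt.mul ?_ (MeromorphicAt.const _ x))
      refine meromorphicAt_sum Finset.univ (fun a _ =>
        MeromorphicAt.mul (meromorphicAt_ratEval _ x) ?_)
      exact meromorphicAt_comp_pow hp1 (ih (x ^ p) hxp a b)
  -- assemble
  refine ⟨Matrix.of (fun i j => fun z => F₀mat z i j), ?_, ?_, B₀, hB0, ?_⟩
  · intro i j x hx
    obtain ⟨K, hK⟩ := hex x (mem_ball_zero_iff.mp hx)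
    have hev2 : ∀ᶠ w in 𝓝[≠] x, ‖w ^ p ^ K‖ < r := by
      have hc : ContinuousAt (fun w : ℂ => ‖w ^ p ^ K‖) x :=
        (continuous_norm.comp (continuous_pow _)).continuousAt
      exact (hc.eventually_lt continuousAt_const hK).filter_mono nhdsWithin_le_nhds
    have heqv : (fun w => G K w i j) =ᶠ[𝓝[≠] x] (fun z => F₀mat z i j) := by
      filter_upwards [sbad_discrete p hp q hq0 (mem_ball_zero_iff.mp hx), hev2] with w hw1 hw2
      rw [hF₀G w hw1.2 K hw2]
    exact (hGmero K x hK i j).congr heqv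
  · have hΨdetc : ContinuousAt (fun z => (Ψ z).det) 0 :=
      (analyticAt_det (fun i j =>
        analyticAt_entry (hΨan 0 (mem_ball_self hr₀)) i j)).continuousAt
    have hdet1 : (Ψ 0).det ≠ 0 := by rw [hΨ0]; simp
    obtain ⟨r₂, hr₂, hballΨ⟩ := Metric.eventually_nhds_iff_ball.mp (hΨdetc.eventually_ne hdet1)
    have hev : ∀ᶠ z in 𝓝[≠] (0:ℂ), ‖z‖ < min r r₂ ∧ z ≠ 0 := by
      have h1 : ∀ᶠ z in 𝓝 (0:ℂ), ‖z‖ < min r r₂ := by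
        have hc : ContinuousAt (fun z : ℂ => ‖z‖) 0 := continuous_norm.continuousAt
        have h0 : ‖(0:ℂ)‖ < min r r₂ := by simp [hrpos, hr₂]
        exact hc.eventually_lt continuousAt_const h0
      refine (h1.filter_mono nhdsWithin_le_nhds).and ?_
      exact eventually_mem_nhdsWithin.mono (fun z hz => hz)
    obtain ⟨z₀, hz₀det, hz₀r, hz₀ne⟩ := (hTdet.and_eventually hev).exists
    have hz₀r' : ‖z₀‖ < r := lt_of_lt_of_le hz₀r (min_le_left _ _)
    refine ⟨z₀, mem_ball_zero_iff.mpr (lt_of_lt_of_le hz₀r' hr1), ?_, ?_⟩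
    · intro i j
      have hFan : AnalyticAt ℂ (fun z => F z i j) z₀ := by
        have hfun : (fun z => F z i j) = fun z => ∑ k : Fin n, T i k z * Ψ z k j := by
          funext w
          simp [hF_def, Matrix.mul_apply, hTmat_def]
        rw [hfun]
        refine Finset.analyticAt_fun_sum _ fun k _ => AnalyticAt.mul ?_ ?_
        · exact (hTan' z₀ (mem_ball_zero_iff.mpr (lt_of_lt_of_le hz₀r' hrs₂)) hz₀ne) i k
        · exact analyticAt_entry (hΨan z₀ (mem_ball_zero_iff.mpr
            (lt_of_lt_of_le hz₀r' hrr₀))) k j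
      have hF₀ev : (fun z => F z i j) =ᶠ[𝓝 z₀] (fun z => F₀mat z i j) := by
        filter_upwards [isOpen_ball.eventually_mem (mem_ball_zero_iff.mpr hz₀r')] with w hw
        rw [hF₀F w (mem_ball_zero_iff.mp hw)]
      exact hFan.congr hF₀ev
    · show (Matrix.of fun i j => F₀mat z₀ i j).det ≠ 0
      have : (Matrix.of fun i j => F₀mat z₀ i j) = F₀mat z₀ := rfl
      rw [this, hF₀F z₀ hz₀r']
      show (Tmat z₀ * Ψ z₀).det ≠ 0
      rw [Matrix.det_mul]
      refine mul_ne_zero hz₀det (hballΨ z₀ (mem_ball_zero_iff.mpr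
        (lt_of_lt_of_le hz₀r (min_le_right _ _))))
  · intro z hz hden hFanz hFanzp
    show Amat z * F₀mat z = F₀mat (z ^ p) * B₀
    have key : ∀ᶠ w in 𝓝[≠] z, Amat w * F₀mat w = F₀mat (w ^ p) * B₀ := by
      filter_upwards [sbad_discrete p hp q hq0 (mem_ball_zero_iff.mp hz)] with w hw
      exact hEQ w (mem_ball_zero_iff.mp hw.1) hw.2
    ext i j
    set ℓ : ℂ → ℂ := fun w => ∑ a : Fin n, ratEval (A i a) w * F₀mat w a j with hℓ_def
    set ρf : ℂ → ℂ := fun w => ∑ b : Fin n, F₀mat (w ^ p) i b * B₀ b j with hρf_def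
    have hentry : ∀ w, (Amat w * F₀mat w) i j = ℓ w := by
      intro w
      simp [hℓ_def, Matrix.mul_apply, hAmat_def]
    have hentry2 : ∀ w, (F₀mat (w ^ p) * B₀) i j = ρf w := by
      intro w
      simp [hρf_def, Matrix.mul_apply]
    have hcl : ContinuousAt ℓ z := by
      refine tendsto_finset_sum _ (fun a _ => Tendsto.mul ?_ ?_)
      · exact ((Polynomial.continuous (A i a).num).continuousAt).div
          ((Polynomial.continuous (A i a).denom).continuousAt) (hden i a)
      · exact (hFanz a j).continuousAt
    have hcr : ContinuousAt ρf z := by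
      refine tendsto_finset_sum _ (fun b _ => Tendsto.mul ?_ tendsto_const_nhds)
      have h1 : ContinuousAt (fun v : ℂ => F₀mat v i b) (z ^ p) := (hFanzp i b).continuousAt
      exact ContinuousAt.comp (x := z) h1 ((continuous_pow p).continuousAt)
    have hevent : ℓ =ᶠ[𝓝[≠] z] ρf := by
      filter_upwards [key] with w hw
      rw [← hentry w, ← hentry2 w, hw]
    have t1 : Tendsto ℓ (𝓝[≠] z) (𝓝 (ℓ z)) := hcl.mono_left nhdsWithin_le_nhds
    have t2 : Tendsto ρf (𝓝[≠] z) (𝓝 (ρf z)) := hcr.mono_left nhdsWithin_le_nhds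
    have t2' : Tendsto ℓ (𝓝[≠] z) (𝓝 (ρf z)) := t2.congr' hevent.symm
    rw [hentry z, hentry2 z]
    exact tendsto_nhds_unique t1 t2'
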